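/- arXiv:2206.04428 — 6 statements merged into one kernel-verified Lean document; each statement's English description precedes it below -/
import Mathlib

section
/- Let η > 0, Ψ > 0, a > 0 and c > 0. The function γ_D(ρ) = η ρ (1−ρ) Ψ a c / (η ρ c + (1−ρ)) is strictly concave on the open interval (0,1). -/
/-- The end-to-end SNR `γ_D(ρ) = ηρ(1-ρ)Ψac/(ηρc + (1-ρ))` is strictly concave on `(0,1)`. -/
theorem statement_4 (η Ψ a c : ℝ) (hη : 0 < η) (hΨ : 0 < Ψ) (ha : 0 < a) (hc : 0 < c) :
    StrictConcaveOn ℝ (Set.Ioo (0 : ℝ) 1)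
      (fun ρ => η * ρ * (1 - ρ) * Ψ * a * c / (η * ρ * c + (1 - ρ))) := by
  set K := η * Ψ * a * c with hKdef
  have hK : 0 < K := by positivity
  set f : ℝ → ℝ := fun ρ => η * ρ * (1 - ρ) * Ψ * a * c / (η * ρ * c + (1 - ρ)) with hf
  set g : ℝ → ℝ := fun ρ => K * (-(η * c - 1) * ρ ^ 2 - 2 * ρ + 1) / (η * ρ * c + (1 - ρ)) ^ 2
    with hg
  have hden : ∀ x ∈ Set.Ioo (0 : ℝ) 1, 0 < η * x * c + (1 - x) := by
    intro x hx
    nlinarith [mul_pos (mul_pos hη hx.1) hc, hx.2]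
  have hd' : ∀ x : ℝ, HasDerivAt (fun ρ => η * ρ * c + (1 - ρ)) (η * c - 1) x := by
    intro x
    have h1 : HasDerivAt (fun ρ : ℝ => η * ρ * c) (η * c) x := by
      simpa using ((hasDerivAt_id x).const_mul η).mul_const c
    have h2 : HasDerivAt (fun ρ : ℝ => 1 - ρ) (-1) x := by
      simpa using (hasDerivAt_id x).const_sub 1
    simpa [sub_eq_add_neg] using h1.fun_add h2
  have hderiv1 : ∀ x ∈ Set.Ioo (0 : ℝ) 1, HasDerivAt f (g x) x := by
    intro x hx
    have hdx := (hden x hx).ne'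
    have hnum : HasDerivAt (fun ρ => η * ρ * (1 - ρ) * Ψ * a * c)
        ((η * (1 - x) + η * x * (-1)) * Ψ * a * c) x := by
      have h1 : HasDerivAt (fun ρ : ℝ => η * ρ) η x := by
        simpa using (hasDerivAt_id x).const_mul η
      have h2 : HasDerivAt (fun ρ : ℝ => 1 - ρ) (-1) x := by
        simpa using (hasDerivAt_id x).const_sub 1
      exact (((h1.mul h2).mul_const Ψ).mul_const a).mul_const c
    have h := hnum.fun_div (hd' x) hdx
    refine h.congr_deriv ?_
    rw [hg]
    field_simp
    ring
  have hderiv2 : ∀ x ∈ Set.Ioo (0 : ℝ) 1,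
      HasDerivAt g (-2 * K * η * c / (η * x * c + (1 - x)) ^ 3) x := by
    intro x hx
    have hdx := (hden x hx).ne'
    have hdx2 : (η * x * c + (1 - x)) ^ 2 ≠ 0 := pow_ne_zero 2 hdx
    have hnum : HasDerivAt (fun ρ => K * (-(η * c - 1) * ρ ^ 2 - 2 * ρ + 1))
        (K * (-(η * c - 1) * (2 * x) - 2)) x := by
      have h1 : HasDerivAt (fun ρ : ℝ => -(η * c - 1) * ρ ^ 2) (-(η * c - 1) * (2 * x)) x := by
        simpa [mul_comm, mul_assoc, mul_left_comm] using
          (hasDerivAt_pow 2 x).const_mul (-(η * c - 1))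
      have h2 : HasDerivAt (fun ρ : ℝ => 2 * ρ) (2 : ℝ) x := by
        simpa using (hasDerivAt_id x).const_mul (2 : ℝ)
      simpa using ((h1.sub h2).add_const 1).const_mul K
    have hden2 : HasDerivAt (fun ρ => (η * ρ * c + (1 - ρ)) ^ 2)
        (2 * (η * x * c + (1 - x)) * (η * c - 1)) x := by
      simpa [mul_comm, mul_assoc, mul_left_comm] using (hd' x).fun_pow 2
    have h := hnum.fun_div hden2 hdx2
    refine h.congr_deriv ?_
    field_simp
    ring
  apply strictConcaveOn_of_deriv2_neg (convex_Ioo 0 1)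
  · intro x hx
    exact (hderiv1 x hx).differentiableAt.continuousAt.continuousWithinAt
  · intro x hx
    rw [interior_Ioo] at hx
    have hEq : Set.EqOn (deriv f) g (Set.Ioo 0 1) := fun y hy => (hderiv1 y hy).deriv
    have h2 : deriv (deriv f) x = deriv g x :=
      Filter.EventuallyEq.deriv_eq (hEq.eventuallyEq_of_mem (isOpen_Ioo.mem_nhds hx))
    have h3 : deriv g x = -2 * K * η * c / (η * x * c + (1 - x)) ^ 3 := (hderiv2 x hx).deriv
    have : deriv^[2] f x = -2 * K * η * c / (η * x * c + (1 - x)) ^ 3 := by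
      simp only [Function.iterate_succ, Function.iterate_zero, Function.comp_apply, id_eq]
      rw [h2, h3]
    rw [this]
    apply div_neg_of_neg_of_pos
    · nlinarith [mul_pos (mul_pos hK hη) hc]
    · exact pow_pos (hden x hx) 3
end

section
/- Let η > 0, Ψ > 0, a > 0 and c > 0, and define γ_D(ρ) = η ρ (1−ρ) Ψ a c / (η ρ c + (1−ρ)) for ρ ∈ (0,1). Then ρ* := 1/(1 + √(ηc)) lies in (0,1) and maximizes γ_D over (0,1): for every ρ ∈ (0,1), γ_D(ρ) ≤ γ_D(ρ*). -/
/-- `ρ* = 1/(1 + √(ηc))` lies in `(0,1)` and maximizes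
`γ_D(ρ) = ηρ(1-ρ)Ψac/(ηρc + (1-ρ))` over `(0,1)`. -/
theorem statement_5 (η Ψ a c : ℝ) (hη : 0 < η) (hΨ : 0 < Ψ) (ha : 0 < a) (hc : 0 < c) :
    1 / (1 + Real.sqrt (η * c)) ∈ Set.Ioo (0 : ℝ) 1 ∧
    ∀ ρ ∈ Set.Ioo (0 : ℝ) 1,
      η * ρ * (1 - ρ) * Ψ * a * c / (η * ρ * c + (1 - ρ)) ≤
        η * (1 / (1 + Real.sqrt (η * c))) * (1 - 1 / (1 + Real.sqrt (η * c))) * Ψ * a * c /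
          (η * (1 / (1 + Real.sqrt (η * c))) * c + (1 - 1 / (1 + Real.sqrt (η * c)))) := by
  set s := Real.sqrt (η * c) with hs_def
  have hs : 0 < s := Real.sqrt_pos.mpr (by positivity)
  have hs2 : s ^ 2 = η * c := Real.sq_sqrt (by positivity)
  have h1s : 0 < 1 + s := by linarith
  constructor
  · constructor
    · positivity
    · rw [div_lt_one h1s]; linarith
  · rintro ρ ⟨h0, h1⟩
    have hd : 0 < η * ρ * c + (1 - ρ) := by nlinarith
    have hds : 0 < η * (1 / (1 + s)) * c + (1 - 1 / (1 + s)) := by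
      have : (0:ℝ) < 1 / (1 + s) := by positivity
      have : 1 / (1 + s) < 1 := by rw [div_lt_one h1s]; linarith
      nlinarith
    have hu : η * (1 / (1 + s)) * c + (1 - 1 / (1 + s)) = s := by
      have hne : (1 + s) ≠ 0 := ne_of_gt h1s
      field_simp
      nlinarith [hs2]
    rw [div_le_div_iff₀ hd hds, hu]
    have h2 : (0:ℝ) < (1 + s) ^ 2 := by positivity
    rw [← mul_le_mul_iff_of_pos_right h2]
    have e : η * (1 / (1 + s)) * (1 - 1 / (1 + s)) * Ψ * a * c * (η * ρ * c + (1 - ρ)) * (1 + s) ^ 2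
        = η * s * Ψ * a * c * (η * ρ * c + (1 - ρ)) := by
      field_simp
      ring
    rw [e]
    have hsub : η * ρ * c = s ^ 2 * ρ := by rw [mul_right_comm η ρ c, ← hs2]
    rw [hsub]
    have key : 0 ≤ (s * ρ - (1 - ρ)) ^ 2 := sq_nonneg _
    have P : 0 < η * Ψ * a * c * s := by positivity
    nlinarith [mul_nonneg (le_of_lt P) key]
end

section
/- Let M ≥ 1, λ_SR > 0, λ_RD > 0, η > 0, Ψ > 0, γ_th > 0 and ρ ∈ (0,1). Let X be the maximum of M i.i.d. exponential(λ_SR) random variables and let Y be exponential(λ_RD), independent of X. Then P( η ρ (1−ρ) Ψ X Y / (η ρ Y + (1−ρ)) < γ_th ) = 1 + Σ_{b=1}^{M} (−1)^b C(M,b) exp(−b λ_SR γ_th/((1−ρ)Ψ)) · λ_RD ∫₀^∞ exp(−b λ_SR γ_th/(η ρ Ψ x) − λ_RD x) dx. -/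
open MeasureTheory ProbabilityTheory Real Finset
open scoped ENNReal NNReal

lemma expMeasure_apply' (r : ℝ) {s : Set ℝ} (hs : MeasurableSet s) :
    expMeasure r s = ∫⁻ x in s, exponentialPDF r x := by
  rw [show expMeasure r = volume.withDensity (exponentialPDF r) from rfl, withDensity_apply _ hs]

lemma expMeasure_Iio' {r : ℝ} (hr : 0 < r) {T : ℝ} (hT : 0 ≤ T) :
    expMeasure r (Set.Iio T) = ENNReal.ofReal (1 - rexp (-(r * T))) := by
  rw [expMeasure_apply' r measurableSet_Iio, setLIntegral_congr Iio_ae_eq_Iic,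
    lintegral_exponentialPDF_eq_antiDeriv hr, if_pos hT]

lemma expMeasure_ae_pos' {r : ℝ} (hr : 0 < r) : ∀ᵐ y ∂(expMeasure r), 0 < y := by
  rw [ae_iff]
  have h : {y : ℝ | ¬ 0 < y} = Set.Iic 0 := by ext y; simp
  rw [h, expMeasure_apply' r measurableSet_Iic, lintegral_exponentialPDF_eq_antiDeriv hr]
  simp

lemma integral_expMeasure' {r : ℝ} (hr : 0 < r) (g : ℝ → ℝ) :
    ∫ y, g y ∂(expMeasure r) = ∫ y in Set.Ioi 0, g y * (r * rexp (-(r * y))) := by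
  have hpdf : exponentialPDF r = fun x => ((exponentialPDFReal r x).toNNReal : ℝ≥0∞) := rfl
  rw [show expMeasure r = volume.withDensity (exponentialPDF r) from rfl, hpdf,
    integral_withDensity_eq_integral_smul ((measurable_exponentialPDFReal r).real_toNNReal)]
  have h1 : (fun y : ℝ => (exponentialPDFReal r y).toNNReal • g y)
      = fun y => exponentialPDFReal r y * g y := by
    funext y
    rw [NNReal.smul_def, smul_eq_mul, Real.coe_toNNReal _ (exponentialPDFReal_nonneg hr y)]
  rw [h1]
  have h0 : ∀ y : ℝ, y ∉ Set.Ici (0:ℝ) → exponentialPDFReal r y * g y = 0 := by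
    intro y hy
    rw [exponentialPDFReal, gammaPDFReal, if_neg (by simpa using hy), zero_mul]
  rw [← setIntegral_eq_integral_of_forall_compl_eq_zero h0, integral_Ici_eq_integral_Ioi]
  refine setIntegral_congr_fun measurableSet_Ioi fun y hy => ?_
  rw [exponentialPDFReal, gammaPDFReal, if_pos (le_of_lt hy)]
  simp only [rpow_one, Real.Gamma_one, div_one, sub_self, rpow_zero, mul_one]
  ring

set_option maxHeartbeats 1000000 in
lemma statement_7_aux (M : ℕ) (hM : 1 ≤ M) (lamSR lamRD η Ψ γth ρ : ℝ)
    (hSR : 0 < lamSR) (hRD : 0 < lamRD) (hη : 0 < η) (hΨ : 0 < Ψ) (hγ : 0 < γth)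
    (hρ0 : 0 < ρ) (hρ1 : ρ < 1) :
    ∫ y, (1 - rexp (-(lamSR * (γth / ((1 - ρ) * Ψ) + γth / (η * ρ * Ψ * y))))) ^ M
        ∂(expMeasure lamRD)
    = 1 + ∑ b ∈ Finset.Icc 1 M, (-1 : ℝ) ^ b * (M.choose b : ℝ) *
        Real.exp (-(b : ℝ) * lamSR * γth / ((1 - ρ) * Ψ)) *
        (lamRD * ∫ x in Set.Ioi (0 : ℝ),
          Real.exp (-(b : ℝ) * lamSR * γth / (η * ρ * Ψ * x) - lamRD * x)) := by
  haveI hPν : IsProbabilityMeasure (expMeasure lamRD) := isProbabilityMeasure_expMeasure hRD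
  have h1ρ : (0:ℝ) < 1 - ρ := by linarith
  set T : ℝ → ℝ := fun y => γth / ((1 - ρ) * Ψ) + γth / (η * ρ * Ψ * y) with hTdef
  have hTmeas : Measurable T :=
    measurable_const.add (measurable_const.div (measurable_id.const_mul _))
  have hT_nonneg : ∀ y : ℝ, 0 < y → 0 ≤ T y := by
    intro y hy
    have h1 : (0:ℝ) ≤ γth / ((1 - ρ) * Ψ) := div_nonneg hγ.le (by positivity)
    have h2 : (0:ℝ) ≤ γth / (η * ρ * Ψ * y) := div_nonneg hγ.le (by positivity)
    simpa [hTdef] using add_nonneg h1 h2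
  set term : ℕ → ℝ → ℝ := fun b y =>
    (-rexp (-(lamSR * T y))) ^ b * (M.choose b : ℝ) * (lamRD * rexp (-(lamRD * y))) with htermdef
  have htermmeas : ∀ b, Measurable (term b) := by
    intro b
    exact ((((hTmeas.const_mul lamSR).neg).exp.neg.pow_const b).mul measurable_const).mul
      ((measurable_id.const_mul lamRD).neg.exp.const_mul lamRD)
  have hterm_int : ∀ b, IntegrableOn (term b) (Set.Ioi 0) := by
    intro b
    have hbase : IntegrableOn (fun y : ℝ => (M.choose b : ℝ) * (lamRD * rexp (-(lamRD * y))))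
        (Set.Ioi 0) := by
      simpa only [neg_mul, IntegrableOn] using
        (((exp_neg_integrableOn_Ioi 0 hRD).const_mul lamRD).const_mul ((M.choose b : ℝ)))
    refine Integrable.mono' hbase ((htermmeas b).aestronglyMeasurable) ?_
    rw [ae_restrict_iff' measurableSet_Ioi]
    refine ae_of_all _ fun y hy => ?_
    have he : (0:ℝ) < rexp (-(lamSR * T y)) := exp_pos _
    have he1 : rexp (-(lamSR * T y)) ≤ 1 :=
      Real.exp_le_one_iff.mpr (by nlinarith [hT_nonneg y hy])
    have hpow : rexp (-(lamSR * T y)) ^ b ≤ 1 := pow_le_one₀ he.le he1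
    have : ‖term b y‖ = rexp (-(lamSR * T y)) ^ b *
        ((M.choose b : ℝ) * (lamRD * rexp (-(lamRD * y)))) := by
      rw [htermdef]
      simp only [norm_mul, norm_pow, norm_neg, Real.norm_eq_abs,
        abs_of_pos he, abs_of_pos (exp_pos _), abs_of_pos hRD,
        Nat.abs_cast]
      ring
    rw [this]
    have hpos : (0:ℝ) ≤ (M.choose b : ℝ) * (lamRD * rexp (-(lamRD * y))) := by positivity
    nlinarith [mul_le_mul_of_nonneg_right hpow hpos]
  have hexpand : ∀ y ∈ Set.Ioi (0:ℝ),
      (1 - rexp (-(lamSR * T y))) ^ M * (lamRD * rexp (-(lamRD * y)))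
      = ∑ b ∈ Finset.range (M + 1), term b y := by
    intro y _
    have := add_pow (-rexp (-(lamSR * T y))) 1 M
    rw [htermdef]
    simp only [one_pow, mul_one] at this
    rw [show (1 : ℝ) - rexp (-(lamSR * T y)) = -rexp (-(lamSR * T y)) + 1 by ring, this,
      Finset.sum_mul]
  rw [integral_expMeasure' hRD, setIntegral_congr_fun measurableSet_Ioi hexpand,
    integral_finset_sum _ (fun b _ => hterm_int b)]
  have hsplit : Finset.range (M + 1) = insert 0 (Finset.Icc 1 M) := by
    ext b; simp [Nat.lt_succ_iff]; omega
  rw [hsplit, Finset.sum_insert (by simp)]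
  have hzero : ∫ y in Set.Ioi (0:ℝ), term 0 y = 1 := by
    have h1 : ∫ y, (1:ℝ) ∂(expMeasure lamRD) = 1 := by simp
    rw [integral_expMeasure' hRD (fun _ => 1)] at h1
    simp only [one_mul] at h1
    rw [htermdef]
    simpa using h1
  rw [hzero]
  congr 1
  refine Finset.sum_congr rfl fun b hb => ?_
  have hptwise : ∀ y ∈ Set.Ioi (0:ℝ), term b y
      = ((-1 : ℝ) ^ b * (M.choose b : ℝ) *
          rexp (-(b : ℝ) * lamSR * γth / ((1 - ρ) * Ψ)) * lamRD) *
        rexp (-(b : ℝ) * lamSR * γth / (η * ρ * Ψ * y) - lamRD * y) := by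
    intro y _
    rw [htermdef]
    simp only []
    rw [neg_pow, ← Real.exp_nat_mul]
    have harg : (b : ℝ) * -(lamSR * T y) + -(lamRD * y)
        = -(b : ℝ) * lamSR * γth / ((1 - ρ) * Ψ) +
          (-(b : ℝ) * lamSR * γth / (η * ρ * Ψ * y) - lamRD * y) := by
      rw [hTdef]; simp only []; ring
    have key : rexp ((b : ℝ) * -(lamSR * T y)) * rexp (-(lamRD * y))
        = rexp (-(b : ℝ) * lamSR * γth / ((1 - ρ) * Ψ)) *
          rexp (-(b : ℝ) * lamSR * γth / (η * ρ * Ψ * y) - lamRD * y) := by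
      rw [← Real.exp_add, ← Real.exp_add, harg]
    linear_combination ((-1 : ℝ) ^ b * (M.choose b : ℝ) * lamRD) * key
  rw [setIntegral_congr_fun measurableSet_Ioi hptwise, integral_const_mul]
  ring

/-- Theorem 1 of the paper (exact integral form, Appendix A, eq. (23)): outage probability of
the SPSR scheme. `X` is the maximum of `M` i.i.d. exponential(λ_SR) source-to-relay gains and
`Y` is the (independent) exponential(λ_RD) relay-to-destination gain. -/
theorem statement_7 {Ω : Type*} [MeasurableSpace Ω] (P : Measure Ω) [IsProbabilityMeasure P]
    (M : ℕ) (hM : 1 ≤ M) (lamSR lamRD η Ψ γth ρ : ℝ)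
    (hSR : 0 < lamSR) (hRD : 0 < lamRD) (hη : 0 < η) (hΨ : 0 < Ψ) (hγ : 0 < γth)
    (hρ : ρ ∈ Set.Ioo (0 : ℝ) 1)
    (X : Fin M → Ω → ℝ) (Y : Ω → ℝ)
    (hmeasX : ∀ m, Measurable (X m)) (hmeasY : Measurable Y)
    (hindep : iIndepFun (Sum.elim X fun _ : Unit => Y) P)
    (hlawX : ∀ m, P.map (X m) = expMeasure lamSR)
    (hlawY : P.map Y = expMeasure lamRD) :
    (P {ω | η * ρ * (1 - ρ) * Ψ * (⨆ m, X m ω) * Y ω / (η * ρ * Y ω + (1 - ρ)) < γth}).toReal =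
      1 + ∑ b ∈ Finset.Icc 1 M, (-1 : ℝ) ^ b * (M.choose b : ℝ) *
        Real.exp (-(b : ℝ) * lamSR * γth / ((1 - ρ) * Ψ)) *
        (lamRD * ∫ x in Set.Ioi (0 : ℝ),
          Real.exp (-(b : ℝ) * lamSR * γth / (η * ρ * Ψ * x) - lamRD * x)) := by
  haveI : NeZero M := ⟨by omega⟩
  haveI hPμ : IsProbabilityMeasure (expMeasure lamSR) := isProbabilityMeasure_expMeasure hSR
  haveI hPν : IsProbabilityMeasure (expMeasure lamRD) := isProbabilityMeasure_expMeasure hRD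
  obtain ⟨hρ0, hρ1⟩ := hρ
  have h1ρ : (0:ℝ) < 1 - ρ := by linarith
  have hne1 : (1:ℝ) - ρ ≠ 0 := ne_of_gt h1ρ
  have hηne : η ≠ 0 := ne_of_gt hη
  have hρne : ρ ≠ 0 := ne_of_gt hρ0
  have hΨne : Ψ ≠ 0 := ne_of_gt hΨ
  set V : Ω → (Fin M → ℝ) := fun ω m => X m ω with hVdef
  have hV : Measurable V := measurable_pi_lambda _ hmeasX
  have hf : ∀ i, Measurable (Sum.elim X (fun _ : Unit => Y) i) := by
    rintro (m | u); exacts [hmeasX m, hmeasY]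
  -- Part A : law of V is the product of exponential laws
  have hmapV : P.map V = Measure.pi (fun _ : Fin M => expMeasure lamSR) := by
    refine (Measure.pi_eq fun s hs => ?_).symm
    rw [Measure.map_apply hV (MeasurableSet.univ_pi hs)]
    have hpre : V ⁻¹' Set.univ.pi s
        = ⋂ i ∈ (Finset.univ : Finset (Fin M ⊕ Unit)),
            Sum.elim X (fun _ : Unit => Y) i ⁻¹' Sum.elim s (fun _ => Set.univ) i := by
      ext ω
      simp [Set.mem_pi, Sum.forall]
      exact Iff.rfl
    rw [hpre, hindep.measure_inter_preimage_eq_mul Finset.univ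
        (fun i _ => by rcases i with m | u; exacts [hs m, MeasurableSet.univ])]
    rw [Fintype.prod_sum_type]
    simp only [Sum.elim_inl, Sum.elim_inr, Set.preimage_univ, measure_univ]
    rw [Finset.prod_const_one, mul_one]
    exact Finset.prod_congr rfl fun m _ => by
      rw [← Measure.map_apply (hmeasX m) (hs m), hlawX m]
  -- Part B : independence of V and Y, hence the joint law
  have hVY : IndepFun V Y P := by
    classical
    have h2 := hindep.indepFun_finset
      (Finset.univ.map ⟨Sum.inl, Sum.inl_injective⟩) {Sum.inr ()}
      (by simp) hf
    have hg1 : Measurable fun v : (i : (Finset.univ.map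
          ⟨Sum.inl (β := Unit), Sum.inl_injective⟩ : Finset (Fin M ⊕ Unit))) → ℝ =>
        fun m : Fin M => v ⟨Sum.inl m, by simp⟩ :=
      measurable_pi_lambda _ fun m => measurable_pi_apply _
    have hg2 : Measurable fun v : (i : ({Sum.inr ()} : Finset (Fin M ⊕ Unit))) → ℝ =>
        v ⟨Sum.inr (), by simp⟩ := measurable_pi_apply _
    exact h2.comp hg1 hg2
  have hjoint : P.map (fun ω => (V ω, Y ω))
      = (Measure.pi (fun _ : Fin M => expMeasure lamSR)).prod (expMeasure lamRD) := by
    rw [(indepFun_iff_map_prod_eq_prod_map_map hV.aemeasurable hmeasY.aemeasurable).mp hVY,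
      hmapV, hlawY]
  -- Part C : the event as a preimage of a measurable set
  set T : ℝ → ℝ := fun y => γth / ((1 - ρ) * Ψ) + γth / (η * ρ * Ψ * y) with hTdef
  have hTmeas : Measurable T :=
    measurable_const.add (measurable_const.div (measurable_id.const_mul _))
  set Sset : Set ((Fin M → ℝ) × ℝ) :=
    {p | η * ρ * (1 - ρ) * Ψ * (⨆ m, p.1 m) * p.2 / (η * ρ * p.2 + (1 - ρ)) < γth} with hSdef
  have hsupm : Measurable fun p : (Fin M → ℝ) × ℝ => ⨆ m, p.1 m :=
    Measurable.iSup fun m => (measurable_pi_apply m).comp measurable_fst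
  have hSmeas : MeasurableSet Sset :=
    measurableSet_lt (((((measurable_const.mul hsupm).mul measurable_snd)).div
      ((measurable_snd.const_mul _).add measurable_const))) measurable_const
  have hEpre : {ω | η * ρ * (1 - ρ) * Ψ * (⨆ m, X m ω) * Y ω / (η * ρ * Y ω + (1 - ρ)) < γth}
      = (fun ω => (V ω, Y ω)) ⁻¹' Sset := rfl
  -- Part D : slices of the event for positive y
  have hslice : ∀ y : ℝ, 0 < y →
      ((fun x : Fin M → ℝ => (x, y)) ⁻¹' Sset)
        = Set.univ.pi fun _ : Fin M => Set.Iio (T y) := by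
    intro y hy
    have hyne : y ≠ 0 := ne_of_gt hy
    have hd : 0 < η * ρ * y + (1 - ρ) := add_pos (by positivity) h1ρ
    have hk : 0 < η * ρ * (1 - ρ) * Ψ * y :=
      mul_pos (mul_pos (mul_pos (mul_pos hη hρ0) h1ρ) hΨ) hy
    ext x
    simp only [Set.mem_preimage, hSdef, Set.mem_setOf_eq, Set.mem_pi, Set.mem_univ,
      Set.mem_Iio, forall_const]
    have hsup_lt : (⨆ m, x m) < T y ↔ ∀ m, x m < T y := by
      rw [← Finset.sup'_univ_eq_ciSup, Finset.sup'_lt_iff]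
      simp
    rw [← hsup_lt, div_lt_iff₀ hd]
    constructor
    · intro h
      have hT' : γth * (η * ρ * y + (1 - ρ)) = η * ρ * (1 - ρ) * Ψ * y * T y := by
        rw [hTdef]; field_simp
      have : η * ρ * (1 - ρ) * Ψ * y * (⨆ m, x m) < η * ρ * (1 - ρ) * Ψ * y * T y := by
        calc η * ρ * (1 - ρ) * Ψ * y * (⨆ m, x m)
            = η * ρ * (1 - ρ) * Ψ * (⨆ m, x m) * y := by ring
          _ < γth * (η * ρ * y + (1 - ρ)) := h
          _ = _ := hT'
      exact lt_of_mul_lt_mul_left this hk.le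
    · intro h
      have hT' : γth * (η * ρ * y + (1 - ρ)) = η * ρ * (1 - ρ) * Ψ * y * T y := by
        rw [hTdef]; field_simp
      calc η * ρ * (1 - ρ) * Ψ * (⨆ m, x m) * y
          = η * ρ * (1 - ρ) * Ψ * y * (⨆ m, x m) := by ring
        _ < η * ρ * (1 - ρ) * Ψ * y * T y := (mul_lt_mul_iff_right₀ hk).mpr h
        _ = γth * (η * ρ * y + (1 - ρ)) := hT'.symm
  have hT_nonneg : ∀ y : ℝ, 0 < y → 0 ≤ T y := by
    intro y hy
    have h1 : (0:ℝ) ≤ γth / ((1 - ρ) * Ψ) := div_nonneg hγ.le (by positivity)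
    have h2 : (0:ℝ) ≤ γth / (η * ρ * Ψ * y) := div_nonneg hγ.le (by positivity)
    simpa [hTdef] using add_nonneg h1 h2
  have hGmeas : Measurable fun y : ℝ =>
      ENNReal.ofReal ((1 - rexp (-(lamSR * T y))) ^ M) :=
    (measurable_const.sub (((hTmeas.const_mul lamSR).neg).exp)).pow_const M |>.ennreal_ofReal
  -- Part E : the probability as a lintegral over y
  have key : P {ω | η * ρ * (1 - ρ) * Ψ * (⨆ m, X m ω) * Y ω / (η * ρ * Y ω + (1 - ρ)) < γth}
      = ∫⁻ y, ENNReal.ofReal ((1 - rexp (-(lamSR * T y))) ^ M) ∂(expMeasure lamRD) := by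
    rw [hEpre, ← Measure.map_apply (hV.prodMk hmeasY) hSmeas, hjoint,
      Measure.prod_apply_symm hSmeas]
    refine lintegral_congr_ae ?_
    filter_upwards [expMeasure_ae_pos' hRD] with y hy
    rw [hslice y hy, Measure.pi_pi]
    rw [expMeasure_Iio' hSR (hT_nonneg y hy), Finset.prod_const, Finset.card_univ,
      Fintype.card_fin, ← ENNReal.ofReal_pow (by
        have := Real.exp_le_one_iff.mpr (by nlinarith [hT_nonneg y hy] : -(lamSR * T y) ≤ 0)
        linarith)]
  rw [key, ← integral_toReal hGmeas.aemeasurable (ae_of_all _ fun y => ENNReal.ofReal_lt_top)]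
  have hfinal : ∫ y, (ENNReal.ofReal ((1 - rexp (-(lamSR * T y))) ^ M)).toReal
        ∂(expMeasure lamRD)
      = ∫ y, (1 - rexp (-(lamSR * (γth / ((1 - ρ) * Ψ) + γth / (η * ρ * Ψ * y))))) ^ M
        ∂(expMeasure lamRD) := by
    refine integral_congr_ae ?_
    filter_upwards [expMeasure_ae_pos' hRD] with y hy
    rw [hTdef, ENNReal.toReal_ofReal]
    have := Real.exp_le_one_iff.mpr (by nlinarith [hT_nonneg y hy] : -(lamSR * T y) ≤ 0)
    exact pow_nonneg (by simp only [hTdef] at this ⊢; linarith) M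
  rw [hfinal, statement_7_aux M hM lamSR lamRD η Ψ γth ρ hSR hRD hη hΨ hγ hρ0 hρ1]
end

section
/- Let M ≥ 1, λ_SR > 0, λ_RE > 0, η > 0, Ψ > 0, Φ > 0, γ_th > 0, ρ ∈ (0,1), and set ρ₁ = 1 − ρ. Fix x ≥ 0. Let X be the maximum of M i.i.d. exponential(λ_SR) random variables and let Z be exponential(λ_RE), independent of X. Then P( η ρ ρ₁ Ψ X Z / (η ρ Z + ρ₁ Φ x + ρ₁) < γ_th ) = 1 + Σ_{b=1}^{M} (−1)^b C(M,b) exp(−b λ_SR γ_th/(ρ₁ Ψ)) · λ_RE ∫₀^∞ exp(−b λ_SR γ_th (Φ x + 1)/(η ρ Ψ z) − λ_RE z) dz. -/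
open MeasureTheory ProbabilityTheory Real Finset

lemma aux_expMeasure_Iio {r : ℝ} (hr : 0 < r) {t : ℝ} (ht : 0 ≤ t) :
    expMeasure r (Set.Iio t) = ENNReal.ofReal (1 - Real.exp (-(r * t))) := by
  have h1 : expMeasure r (Set.Iio t) = ∫⁻ y in Set.Iio t, exponentialPDF r y := by
    rw [expMeasure, gammaMeasure, withDensity_apply _ measurableSet_Iio]
    rfl
  rw [h1, setLIntegral_congr (Iio_ae_eq_Iic (a := t) (μ := volume)),
    lintegral_exponentialPDF_eq_antiDeriv hr t, if_pos ht]

lemma aux_expMeasure_Iic_zero (r : ℝ) : expMeasure r (Set.Iic (0 : ℝ)) = 0 := by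
  rw [expMeasure, gammaMeasure, withDensity_apply _ measurableSet_Iic,
    setLIntegral_congr (Iio_ae_eq_Iic (a := (0 : ℝ)) (μ := volume)).symm]
  exact lintegral_gammaPDF_of_nonpos le_rfl

lemma measurable_exponentialPDF (r : ℝ) : Measurable (ProbabilityTheory.exponentialPDF r) :=
  (ProbabilityTheory.measurable_exponentialPDFReal r).ennreal_ofReal

lemma aux_integrable {c d : ℝ} (hc : 0 ≤ c) (hd : 0 < d) :
    IntegrableOn (fun z => Real.exp (-(c / z) - d * z)) (Set.Ioi (0 : ℝ)) := by
  have hmeas : Measurable fun z : ℝ => Real.exp (-(c / z) - d * z) :=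
    Real.measurable_exp.comp
      (((measurable_const.div measurable_id).neg).sub (measurable_id.const_mul d))
  refine Integrable.mono (g := fun z : ℝ => Real.exp (-d * z))
    (exp_neg_integrableOn_Ioi 0 hd) hmeas.aestronglyMeasurable ?_
  filter_upwards [ae_restrict_mem measurableSet_Ioi] with z hz
  rw [Real.norm_eq_abs, Real.abs_exp, Real.norm_eq_abs, Real.abs_exp]
  apply Real.exp_le_exp.mpr
  have h1 : 0 ≤ c / z := div_nonneg hc (le_of_lt hz)
  nlinarith

/-- The conditional non-intercept probability `Q₂(x)` of the eavesdropper's relaying-phase SNR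
in the SPSR scheme (Appendix B, before the Bessel-function evaluation). `X` is the maximum of
`M` i.i.d. exponential(λ_SR) gains, `Z` exponential(λ_RE) independent of `X`, `ρ₁ = 1-ρ`, and
`x ≥ 0` the conditioned aggregate jammer-to-eavesdropper gain. -/
theorem statement_8 {Ω : Type*} [MeasurableSpace Ω] (P : Measure Ω) [IsProbabilityMeasure P]
    (M : ℕ) (hM : 1 ≤ M) (lamSR lamRE η Ψ Φ γth ρ : ℝ)
    (hSR : 0 < lamSR) (hRE : 0 < lamRE) (hη : 0 < η) (hΨ : 0 < Ψ) (hΦ : 0 < Φ) (hγ : 0 < γth)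
    (hρ : ρ ∈ Set.Ioo (0 : ℝ) 1) (ρ₁ : ℝ) (hρ₁ : ρ₁ = 1 - ρ)
    (x : ℝ) (hx : 0 ≤ x)
    (X : Fin M → Ω → ℝ) (Z : Ω → ℝ)
    (hmeasX : ∀ m, Measurable (X m)) (hmeasZ : Measurable Z)
    (hindep : iIndepFun (Sum.elim X fun _ : Unit => Z) P)
    (hlawX : ∀ m, P.map (X m) = expMeasure lamSR)
    (hlawZ : P.map Z = expMeasure lamRE) :
    (P {ω | η * ρ * ρ₁ * Ψ * (⨆ m, X m ω) * Z ω /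
        (η * ρ * Z ω + ρ₁ * Φ * x + ρ₁) < γth}).toReal =
      1 + ∑ b ∈ Finset.Icc 1 M, (-1 : ℝ) ^ b * (M.choose b : ℝ) *
        Real.exp (-(b : ℝ) * lamSR * γth / (ρ₁ * Ψ)) *
        (lamRE * ∫ z in Set.Ioi (0 : ℝ),
          Real.exp (-(b : ℝ) * lamSR * γth * (Φ * x + 1) / (η * ρ * Ψ * z) - lamRE * z)) := by
  classical
  obtain ⟨hρ0, hρlt⟩ := hρ
  have hρ₁pos : 0 < ρ₁ := by rw [hρ₁]; linarith
  have hne : Nonempty (Fin M) := ⟨⟨0, hM⟩⟩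
  set S : Ω → ℝ := fun ω => ⨆ m, X m ω with hSdef
  have hmeasS : Measurable S := Measurable.iSup fun m => hmeasX m
  -- independence of S and Z
  have hmeasW : ∀ i : Fin M ⊕ Unit, Measurable (Sum.elim X (fun _ : Unit => Z) i) := by
    rintro (m | u)
    · exact hmeasX m
    · exact hmeasZ
  have hSZ : IndepFun S Z P := by
    have hdisj : Disjoint ((Finset.univ : Finset (Fin M)).image Sum.inl)
        ({Sum.inr ()} : Finset (Fin M ⊕ Unit)) := by simp
    have h1 := hindep.indepFun_finset _ _ hdisj hmeasW
    have hg : Measurable (fun v : (((Finset.univ : Finset (Fin M)).image Sum.inl :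
          Finset (Fin M ⊕ Unit))) → ℝ =>
        ⨆ m : Fin M, v ⟨Sum.inl m, by simp⟩) :=
      Measurable.iSup fun m => measurable_pi_apply _
    have hh : Measurable (fun v : (({Sum.inr ()} : Finset (Fin M ⊕ Unit))) → ℝ =>
        v ⟨Sum.inr (), by simp⟩) := measurable_pi_apply _
    exact h1.comp hg hh
  -- law of S on Iio
  have hμS : ∀ t : ℝ, P.map S (Set.Iio t) = (expMeasure lamSR (Set.Iio t)) ^ M := by
    intro t
    rw [Measure.map_apply hmeasS measurableSet_Iio]
    have hset : S ⁻¹' Set.Iio t =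
        ⋂ i : Fin M ⊕ Unit, Sum.elim X (fun _ : Unit => Z) i ⁻¹'
          (Sum.elim (fun _ : Fin M => Set.Iio t) (fun _ => Set.univ) i) := by
      ext ω
      simp only [Set.mem_preimage, Set.mem_Iio, Set.mem_iInter]
      constructor
      · rintro h (m | u)
        · simpa using lt_of_le_of_lt (le_ciSup (Set.finite_range fun m => X m ω).bddAbove m) h
        · simp
      · intro h
        have h' : ∀ m, X m ω < t := fun m => by simpa using h (Sum.inl m)
        show (⨆ m, X m ω) < t
        rw [← Finset.sup'_univ_eq_ciSup]
        exact (Finset.sup'_lt_iff Finset.univ_nonempty).mpr fun m _ => h' m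
    rw [hset, hindep.meas_iInter ?_]
    · rw [Fintype.prod_sum_type]
      simp only [Sum.elim_inl, Sum.elim_inr, Set.preimage_univ, measure_univ,
        Finset.prod_const_one, mul_one]
      have heach : ∀ m : Fin M, P (X m ⁻¹' Set.Iio t) = expMeasure lamSR (Set.Iio t) :=
        fun m => by rw [← hlawX m, Measure.map_apply (hmeasX m) measurableSet_Iio]
      rw [Finset.prod_congr rfl fun m _ => heach m, Finset.prod_const, Finset.card_univ,
        Fintype.card_fin]
    · rintro (m | u)
      · exact ⟨Set.Iio t, measurableSet_Iio, rfl⟩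
      · exact ⟨Set.univ, MeasurableSet.univ, rfl⟩
  haveI hprobν : IsProbabilityMeasure (expMeasure lamRE) := isProbabilityMeasure_expMeasure hRE
  haveI hprobμS : IsProbabilityMeasure (P.map S) := Measure.isProbabilityMeasure_map hmeasS.aemeasurable
  set ev : Set (ℝ × ℝ) :=
    {p : ℝ × ℝ | η * ρ * ρ₁ * Ψ * p.1 * p.2 / (η * ρ * p.2 + ρ₁ * Φ * x + ρ₁) < γth} with hev
  have hevmeas : MeasurableSet ev := by
    apply measurableSet_lt _ measurable_const
    fun_prop
  have hPev : P {ω | η * ρ * ρ₁ * Ψ * (⨆ m, X m ω) * Z ω /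
      (η * ρ * Z ω + ρ₁ * Φ * x + ρ₁) < γth} = ((P.map S).prod (expMeasure lamRE)) ev := by
    have hpair : P.map (fun ω => (S ω, Z ω)) = (P.map S).prod (P.map Z) :=
      (indepFun_iff_map_prod_eq_prod_map_map hmeasS.aemeasurable hmeasZ.aemeasurable).mp hSZ
    rw [← hlawZ, ← hpair, Measure.map_apply (hmeasS.prodMk hmeasZ) hevmeas]
    rfl
  -- the threshold function
  set T : ℝ → ℝ := fun z => γth / (ρ₁ * Ψ) + γth * (Φ * x + 1) / (η * ρ * Ψ * z) with hT
  have hTpos : ∀ z ∈ Set.Ioi (0 : ℝ), 0 < T z := by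
    intro z hz
    have hz' : (0 : ℝ) < z := hz
    have h1 : (0 : ℝ) < γth / (ρ₁ * Ψ) := by positivity
    have h2 : (0 : ℝ) < γth * (Φ * x + 1) / (η * ρ * Ψ * z) := by positivity
    simp only [hT]
    linarith
  -- slice computation
  have hslice : ∀ z ∈ Set.Ioi (0 : ℝ),
      (P.map S) ((fun u => (u, z)) ⁻¹' ev) =
        ENNReal.ofReal (1 - Real.exp (-(lamSR * T z))) ^ M := by
    intro z hz
    have hz' : (0 : ℝ) < z := hz
    have hD : (0 : ℝ) < η * ρ * z + ρ₁ * Φ * x + ρ₁ := by positivity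
    have hk : (0 : ℝ) < η * ρ * ρ₁ * Ψ * z := by positivity
    have hsetz : (fun u => (u, z)) ⁻¹' ev = Set.Iio (T z) := by
      ext u
      simp only [hev, Set.mem_preimage, Set.mem_setOf_eq, Set.mem_Iio]
      rw [div_lt_iff₀ hD,
        show η * ρ * ρ₁ * Ψ * u * z = u * (η * ρ * ρ₁ * Ψ * z) by ring, ← lt_div_iff₀ hk,
        show γth * (η * ρ * z + ρ₁ * Φ * x + ρ₁) / (η * ρ * ρ₁ * Ψ * z) = T z by
          simp only [hT]; field_simp; ring]
    rw [hsetz, hμS (T z), aux_expMeasure_Iio hSR (le_of_lt (hTpos z hz))]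
  -- the density function
  set q : ℝ → ℝ := fun z =>
    lamRE * Real.exp (-(lamRE * z)) * (1 - Real.exp (-(lamSR * T z))) ^ M with hq
  have hqmeas : Measurable q := by
    apply Measurable.mul
    · fun_prop
    · apply Measurable.pow _ measurable_const
      apply Measurable.sub measurable_const
      apply Real.measurable_exp.comp
      apply Measurable.neg
      apply Measurable.mul measurable_const
      simp only [hT]
      fun_prop
  have hmain : ((P.map S).prod (expMeasure lamRE)) ev = ∫⁻ z in Set.Ioi (0 : ℝ), ENNReal.ofReal (q z) := by
    rw [Measure.prod_apply_symm hevmeas]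
    have h1 : ∫⁻ z, (P.map S) ((fun u => (u, z)) ⁻¹' ev) ∂(expMeasure lamRE)
        = ∫⁻ z in Set.Ioi (0 : ℝ), (P.map S) ((fun u => (u, z)) ⁻¹' ev) ∂(expMeasure lamRE) := by
      rw [← lintegral_add_compl (fun z => (P.map S) ((fun u => (u, z)) ⁻¹' ev))
        (measurableSet_Ioi (a := (0 : ℝ)))]
      have hν0 : (expMeasure lamRE) (Set.Ioi (0 : ℝ))ᶜ = 0 := by
        rw [Set.compl_Ioi]; exact aux_expMeasure_Iic_zero lamRE
      rw [setLIntegral_measure_zero _ _ hν0, add_zero]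
    rw [h1, setLIntegral_congr_fun_ae measurableSet_Ioi (ae_of_all _ hslice)]
    have hν' : expMeasure lamRE = volume.withDensity (exponentialPDF lamRE) := rfl
    rw [hν', restrict_withDensity measurableSet_Ioi,
      lintegral_withDensity_eq_lintegral_mul _
        (measurable_exponentialPDF lamRE)
        (by
          apply Measurable.pow _ measurable_const
          apply Measurable.ennreal_ofReal
          apply Measurable.sub measurable_const
          apply Real.measurable_exp.comp
          apply Measurable.neg
          apply Measurable.mul measurable_const
          simp only [hT]
          fun_prop)]
    apply setLIntegral_congr_fun_ae measurableSet_Ioi (ae_of_all _ ?_)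
    intro z hz
    have hz' : (0 : ℝ) < z := hz
    have hA0 : 0 ≤ 1 - Real.exp (-(lamSR * T z)) := by
      have := hTpos z hz
      have : Real.exp (-(lamSR * T z)) ≤ 1 := by
        rw [Real.exp_le_one_iff]
        nlinarith
      linarith
    simp only [Pi.mul_apply]
    rw [exponentialPDF_of_nonneg (le_of_lt hz'), ← ENNReal.ofReal_pow hA0,
      ← ENNReal.ofReal_mul (by positivity)]
  rw [hPev, hmain]
  have hq0 : 0 ≤ᵐ[volume.restrict (Set.Ioi (0 : ℝ))] q := by
    filter_upwards [ae_restrict_mem measurableSet_Ioi] with z hz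
    have hz' : (0 : ℝ) < z := hz
    have hA0 : 0 ≤ 1 - Real.exp (-(lamSR * T z)) := by
      have := hTpos z hz
      have : Real.exp (-(lamSR * T z)) ≤ 1 := by
        rw [Real.exp_le_one_iff]
        nlinarith
      linarith
    simp only [hq]
    positivity
  rw [← integral_eq_lintegral_of_nonneg_ae hq0 hqmeas.aestronglyMeasurable.restrict]
  -- now a real computation
  have hsum : Set.EqOn q (fun z =>
      ∑ b ∈ Finset.range (M + 1), (-1 : ℝ) ^ b * (M.choose b : ℝ) *
        Real.exp (-(b : ℝ) * lamSR * γth / (ρ₁ * Ψ)) *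
        (lamRE * Real.exp (-(b : ℝ) * lamSR * γth * (Φ * x + 1) / (η * ρ * Ψ * z) - lamRE * z)))
      (Set.Ioi (0 : ℝ)) := by
    intro z hz
    have hz' : (0 : ℝ) < z := hz
    simp only [hq]
    rw [sub_eq_neg_add, add_pow, Finset.mul_sum]
    refine Finset.sum_congr rfl fun b hb => ?_
    rw [one_pow, mul_one, neg_pow, ← Real.exp_nat_mul]
    have hexp : Real.exp (-(b : ℝ) * lamSR * γth / (ρ₁ * Ψ)) *
        Real.exp (-(b : ℝ) * lamSR * γth * (Φ * x + 1) / (η * ρ * Ψ * z) - lamRE * z)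
        = Real.exp (-(lamRE * z)) * Real.exp ((b : ℝ) * -(lamSR * T z)) := by
      rw [← Real.exp_add, ← Real.exp_add]
      congr 1
      simp only [hT]
      field_simp
      ring
    calc lamRE * Real.exp (-(lamRE * z)) * ((-1 : ℝ) ^ b * Real.exp ((b : ℝ) * -(lamSR * T z))
            * (M.choose b : ℝ))
        = (-1 : ℝ) ^ b * (M.choose b : ℝ) * lamRE *
            (Real.exp (-(lamRE * z)) * Real.exp ((b : ℝ) * -(lamSR * T z))) := by ring
      _ = (-1 : ℝ) ^ b * (M.choose b : ℝ) *
            Real.exp (-(b : ℝ) * lamSR * γth / (ρ₁ * Ψ)) *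
            (lamRE * Real.exp (-(b : ℝ) * lamSR * γth * (Φ * x + 1) / (η * ρ * Ψ * z)
              - lamRE * z)) := by rw [← hexp]; ring
  rw [setIntegral_congr_fun measurableSet_Ioi hsum]
  have hint : ∀ b : ℕ, IntegrableOn (fun z : ℝ =>
      Real.exp (-(b : ℝ) * lamSR * γth * (Φ * x + 1) / (η * ρ * Ψ * z) - lamRE * z))
      (Set.Ioi (0 : ℝ)) := by
    intro b
    have hc : 0 ≤ (b : ℝ) * lamSR * γth * (Φ * x + 1) / (η * ρ * Ψ) := by positivity
    have heq : (fun z : ℝ =>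
        Real.exp (-((b : ℝ) * lamSR * γth * (Φ * x + 1) / (η * ρ * Ψ) / z) - lamRE * z))
        = fun z : ℝ =>
        Real.exp (-(b : ℝ) * lamSR * γth * (Φ * x + 1) / (η * ρ * Ψ * z) - lamRE * z) := by
      funext z
      congr 1
      ring
    exact heq ▸ aux_integrable hc hRE
  rw [integral_finset_sum _ fun b _ => (((hint b).const_mul lamRE).const_mul _)]
  simp only [MeasureTheory.integral_const_mul]
  have hsplit : Finset.range (M + 1) = insert 0 (Finset.Icc 1 M) := by
    ext b
    simp only [Finset.mem_range, Finset.mem_insert, Finset.mem_Icc]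
    omega
  rw [hsplit, Finset.sum_insert (by simp)]
  congr 1
  have h0int : ∫ z in Set.Ioi (0 : ℝ),
      Real.exp (-(0 : ℕ) * lamSR * γth * (Φ * x + 1) / (η * ρ * Ψ * z) - lamRE * z)
      = 1 / lamRE := by
    have : (fun z : ℝ =>
        Real.exp (-(0 : ℕ) * lamSR * γth * (Φ * x + 1) / (η * ρ * Ψ * z) - lamRE * z))
        = fun z : ℝ => Real.exp (-(lamRE * z)) := by
      funext z
      congr 1
      simp
    rw [this]
    have h2 : (fun z : ℝ => Real.exp (-(lamRE * z)))
        = fun z : ℝ => (fun u : ℝ => Real.exp (-u)) (lamRE * z) := by funext z; simp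
    rw [h2, integral_comp_mul_left_Ioi (fun u : ℝ => Real.exp (-u)) 0 hRE, mul_zero,
      integral_exp_neg_Ioi_zero]
    simp [one_div]
  rw [h0int]
  simp [hRE.ne']
end

section
/- Let M ≥ 1, K ≥ 1, λ_SR > 0, λ_RE > 0, λ_RD > 0, λ_SE > 0, λ_JE > 0, η > 0, Ψ > 0, Φ > 0 and γ_th > 0. Let G be exponential(λ_SE), X the maximum of M i.i.d. exponential(λ_SR) random variables, Z exponential(λ_RE), W exponential(λ_RD), and Ξ Gamma-distributed with shape K and rate λ_JE, all mutually independent, and set ρ*(W) = 1/(1 + √(ηW)). Then P( max( Ψ G/(Φ Ξ), η ρ*(W)(1−ρ*(W)) Ψ X Z/(η ρ*(W) Z + (1−ρ*(W)) Φ Ξ + (1−ρ*(W))) ) ≥ γ_th ) = 1 − ∫₀^∞ ∫₀^∞ (1 − exp(−γ_th λ_SE Φ x/Ψ)) · P( η Ψ X Z / ( η ((1+√(ηw))/√(ηw)) Z + (1+√(ηw))(Φ x + 1) ) < γ_th ) · λ_RD e^{−λ_RD w} · (λ_JE^K/(K−1)!) x^{K−1} e^{−λ_JE x} dw dx. -/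
open MeasureTheory ProbabilityTheory Real Finset
open scoped ENNReal

section IPaux

lemma IP_setLintegral_gammaPDF_Iic_zero (a r : ℝ) : ∫⁻ x in Set.Iic (0:ℝ), gammaPDF a r x = 0 := by
  rw [← Set.Iio_union_right, lintegral_union (measurableSet_singleton 0) (by simp)]
  have h1 : ∫⁻ x in Set.Iio (0:ℝ), gammaPDF a r x = 0 := by
    rw [setLIntegral_congr_fun measurableSet_Iio
      (fun x (hx : x < 0) ↦ gammaPDF_of_neg hx), lintegral_zero]
  have h2 : ∫⁻ x in ({0} : Set ℝ), gammaPDF a r x = 0 :=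
    setLIntegral_measure_zero _ _ Real.volume_singleton
  rw [h1, h2, add_zero]

lemma IP_gammaMeasure_ae_Ioi (a r : ℝ) : ∀ᵐ x ∂(gammaMeasure a r), x ∈ Set.Ioi (0:ℝ) := by
  rw [ae_iff]
  have h : {x : ℝ | ¬ x ∈ Set.Ioi (0:ℝ)} = Set.Iic 0 := by ext x; simp [not_lt]
  rw [h, gammaMeasure, withDensity_apply _ measurableSet_Iic]
  exact IP_setLintegral_gammaPDF_Iic_zero a r

lemma IP_gammaMeasure_Iic_zero (a r : ℝ) : gammaMeasure a r (Set.Iic 0) = 0 := by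
  rw [gammaMeasure, withDensity_apply _ measurableSet_Iic]
  exact IP_setLintegral_gammaPDF_Iic_zero a r

lemma IP_expMeasure_eq_withDensity (r : ℝ) :
    expMeasure r = volume.withDensity (exponentialPDF r) := rfl

lemma IP_expMeasure_Iio {r c : ℝ} (hr : 0 < r) (hc : 0 ≤ c) :
    expMeasure r (Set.Iio c) = ENNReal.ofReal (1 - Real.exp (-(r * c))) := by
  rw [IP_expMeasure_eq_withDensity, withDensity_apply _ measurableSet_Iio]
  have h : ∫⁻ x in Set.Iic c, exponentialPDF r x = ∫⁻ x in Set.Iio c, exponentialPDF r x := by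
    rw [← Set.Iio_union_right, lintegral_union (measurableSet_singleton c) (by simp),
      setLIntegral_measure_zero _ _ Real.volume_singleton, add_zero]
  rw [← h, lintegral_exponentialPDF_eq_antiDeriv hr, if_pos hc]

lemma IP_lintegral_withDensity_toReal {d : ℝ → ℝ≥0∞} (hd : Measurable d)
    (hd0 : ∫⁻ x in Set.Iic (0:ℝ), d x = 0)
    {dR : ℝ → ℝ} (hdR : ∀ x ∈ Set.Ioi (0:ℝ), d x = ENNReal.ofReal (dR x))
    (hdRnn : ∀ x ∈ Set.Ioi (0:ℝ), 0 ≤ dR x) (hdRm : Measurable dR)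
    {F : ℝ → ℝ≥0∞} (hF : Measurable F) (hFle : ∀ x, F x ≤ 1) :
    (∫⁻ x, F x ∂(volume.withDensity d)).toReal = ∫ x in Set.Ioi (0:ℝ), (F x).toReal * dR x := by
  rw [lintegral_withDensity_eq_lintegral_mul _ hd hF]
  have hsplit : ∫⁻ x, (d * F) x = ∫⁻ x in Set.Ioi (0:ℝ), (d * F) x := by
    rw [← lintegral_add_compl (d * F) measurableSet_Ioi (μ := volume), Set.compl_Ioi]
    have h : ∫⁻ x in Set.Iic (0:ℝ), (d * F) x = 0 := by
      refine le_antisymm (le_trans (lintegral_mono (fun x => ?_)) hd0.le) zero_le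
      simp only [Pi.mul_apply]
      calc d x * F x ≤ d x * 1 := mul_le_mul_right (hFle x) _
        _ = d x := mul_one _
    rw [h, add_zero]
  rw [hsplit]
  have hcong : ∫⁻ x in Set.Ioi (0:ℝ), (d * F) x =
      ∫⁻ x in Set.Ioi (0:ℝ), ENNReal.ofReal ((F x).toReal * dR x) := by
    refine setLIntegral_congr_fun measurableSet_Ioi (fun x hx => ?_)
    rw [Pi.mul_apply, hdR x hx, ENNReal.ofReal_mul (ENNReal.toReal_nonneg),
      ENNReal.ofReal_toReal (ne_top_of_le_ne_top ENNReal.one_ne_top (hFle x)), mul_comm]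
  rw [hcong, ← integral_eq_lintegral_of_nonneg_ae]
  · rw [Filter.EventuallyLE, ae_restrict_iff' measurableSet_Ioi]
    exact ae_of_all _ fun x hx => mul_nonneg ENNReal.toReal_nonneg (hdRnn x hx)
  · exact ((hF.ennreal_toReal).mul hdRm).aestronglyMeasurable

lemma IP_exponentialPDF_eq_ofReal {r : ℝ} (x : ℝ) (hx : x ∈ Set.Ioi (0:ℝ)) :
    exponentialPDF r x = ENNReal.ofReal (r * Real.exp (-r * x)) := by
  rw [exponentialPDF_of_nonneg (le_of_lt hx), neg_mul]

lemma IP_gammaPDF_eq_ofReal {K : ℕ} (hK : 1 ≤ K) {r : ℝ} (x : ℝ) (hx : x ∈ Set.Ioi (0:ℝ)) :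
    gammaPDF K r x =
      ENNReal.ofReal (r ^ K / (Nat.factorial (K - 1)) * x ^ (K - 1) * Real.exp (-r * x)) := by
  obtain ⟨n, rfl⟩ : ∃ n, K = n + 1 := ⟨K - 1, (Nat.succ_pred_eq_of_pos hK).symm⟩
  rw [gammaPDF_of_nonneg (le_of_lt hx)]
  congr 1
  push_cast
  rw [show ((n : ℝ) + 1) = ((n : ℕ) : ℝ) + 1 from rfl, Real.Gamma_nat_eq_factorial,
    add_sub_cancel_right, Real.rpow_natCast, show ((n:ℝ)+1) = (((n+1 : ℕ)):ℝ) by push_cast; ring,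
    Real.rpow_natCast]
  simp [neg_mul]

lemma IP_bval_eq {η Ψ Φ : ℝ} (hη : 0 < η) (hΨ : 0 < Ψ) (hΦ : 0 < Φ)
    {s ξ z : ℝ} (hs : 0 < s) (hξ : 0 ≤ ξ) (hz : 0 ≤ z) (u : ℝ) :
    η * (1/(1+s)) * (1 - 1/(1+s)) * Ψ * u * z /
      (η * (1/(1+s)) * z + (1 - 1/(1+s)) * Φ * ξ + (1 - 1/(1+s)))
    = η * Ψ * u * z / (η * ((1+s)/s) * z + (1+s)*(Φ*ξ+1)) := by
  have ht : (0:ℝ) < 1 + s := by linarith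
  have hd : (0:ℝ) < η * z + s * Φ * ξ + s := by positivity
  have h1 : 1 - 1/(1+s) = s/(1+s) := by field_simp; ring
  rw [h1]
  have hden1 : η * (1/(1+s)) * z + s/(1+s) * Φ * ξ + s/(1+s) = (η*z + s*Φ*ξ + s)/(1+s) := by
    field_simp
  have hden2 : η * ((1+s)/s) * z + (1+s)*(Φ*ξ+1) = (1+s)*(η*z + s*Φ*ξ + s)/s := by
    field_simp; ring
  rw [hden1, hden2, div_eq_div_iff (by positivity) (by positivity)]
  field_simp

end IPaux

/-- Theorem 4 of the paper (exact conditional double-integral form, Appendix D): intercept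
probability of the DPSR scheme with dynamic splitting ratio `ρ*(W) = 1/(1+√(ηW))`. `G` is the
exponential(λ_SE) source-to-eavesdropper gain, `X` the maximum of `M` i.i.d.
exponential(λ_SR) source-to-relay gains, `Z` the exponential(λ_RE) relay-to-eavesdropper gain,
`W` the exponential(λ_RD) relay-to-destination gain, and `Ξ` the Gamma(K, λ_JE)-distributed
aggregate jammer-to-eavesdropper gain, all mutually independent. -/
theorem statement_13 {Ω : Type*} [MeasurableSpace Ω] (P : Measure Ω) [IsProbabilityMeasure P]
    (M K : ℕ) (hM : 1 ≤ M) (hK : 1 ≤ K)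
    (lamSR lamRE lamRD lamSE lamJE η Ψ Φ γth : ℝ)
    (hSR : 0 < lamSR) (hRE : 0 < lamRE) (hRD : 0 < lamRD) (hSE : 0 < lamSE) (hJE : 0 < lamJE)
    (hη : 0 < η) (hΨ : 0 < Ψ) (hΦ : 0 < Φ) (hγ : 0 < γth)
    (G : Ω → ℝ) (X : Fin M → Ω → ℝ) (Z : Ω → ℝ) (W : Ω → ℝ) (Ξ : Ω → ℝ)
    (hmeasG : Measurable G) (hmeasX : ∀ m, Measurable (X m)) (hmeasZ : Measurable Z)
    (hmeasW : Measurable W) (hmeasΞ : Measurable Ξ)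
    (hindep : iIndepFun (Sum.elim X ![G, Z, W, Ξ]) P)
    (hlawG : P.map G = expMeasure lamSE)
    (hlawX : ∀ m, P.map (X m) = expMeasure lamSR)
    (hlawZ : P.map Z = expMeasure lamRE)
    (hlawW : P.map W = expMeasure lamRD)
    (hlawΞ : P.map Ξ = gammaMeasure K lamJE)
    (ρstar : ℝ → ℝ) (hρstar : ∀ w, ρstar w = 1 / (1 + Real.sqrt (η * w))) :
    (P {ω | γth ≤ max (Ψ * G ω / (Φ * Ξ ω))
        (η * ρstar (W ω) * (1 - ρstar (W ω)) * Ψ * (⨆ m, X m ω) * Z ω /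
          (η * ρstar (W ω) * Z ω + (1 - ρstar (W ω)) * Φ * Ξ ω +
            (1 - ρstar (W ω))))}).toReal =
      1 - ∫ x in Set.Ioi (0 : ℝ), ∫ w in Set.Ioi (0 : ℝ),
        (1 - Real.exp (-γth * lamSE * Φ * x / Ψ)) *
        (P {ω | η * Ψ * (⨆ m, X m ω) * Z ω /
            (η * ((1 + Real.sqrt (η * w)) / Real.sqrt (η * w)) * Z ω +
              (1 + Real.sqrt (η * w)) * (Φ * x + 1)) < γth}).toReal *
        (lamRD * Real.exp (-lamRD * w)) *
        (lamJE ^ K / (K - 1).factorial * x ^ (K - 1) * Real.exp (-lamJE * x)) := by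
  classical
  haveI : Nonempty (Fin M) := ⟨⟨0, hM⟩⟩
  have hS : Measurable (fun ω => ⨆ m, X m ω) := Measurable.iSup hmeasX
  have hSZ : Measurable (fun ω => (⨆ m, X m ω, Z ω)) := hS.prodMk hmeasZ
  -- independence groupings
  obtain ⟨h1, h3, h2⟩ : IndepFun (fun ω => (G ω, (⨆ m, X m ω, Z ω))) (fun ω => (Ξ ω, W ω)) P ∧
      IndepFun G (fun ω => (⨆ m, X m ω, Z ω)) P ∧ IndepFun Ξ W P := by
    set f : (Fin M ⊕ Fin 4) → Ω → ℝ := Sum.elim X ![G, Z, W, Ξ] with hf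
    have hfmeas : ∀ i, Measurable (f i) := by
      rintro (m | j)
      · exact hmeasX m
      · fin_cases j <;> simpa [hf] using ‹_›
    set SA : Finset (Fin M ⊕ Fin 4) :=
      insert (Sum.inr 0) (insert (Sum.inr 1) (Finset.univ.image Sum.inl)) with hSA
    set TB : Finset (Fin M ⊕ Fin 4) := {Sum.inr 3, Sum.inr 2} with hTB
    have hdisj : Disjoint SA TB := by
      rw [Finset.disjoint_left]
      rintro a ha hb
      simp only [hSA, hTB, Finset.mem_insert, Finset.mem_image, Finset.mem_univ, true_and,
        Finset.mem_singleton] at ha hb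
      rcases hb with hb | hb <;> subst hb <;>
        rcases ha with h | h | ⟨m, h⟩ <;> simp_all
    have hmem0 : Sum.inr 0 ∈ SA := by simp [hSA]
    have hmem1 : Sum.inr 1 ∈ SA := by simp [hSA]
    have hmemm : ∀ m : Fin M, Sum.inl m ∈ SA := fun m => by simp [hSA]
    have hmem3 : (Sum.inr 3 : Fin M ⊕ Fin 4) ∈ TB := by simp [hTB]
    have hmem2 : (Sum.inr 2 : Fin M ⊕ Fin 4) ∈ TB := by simp [hTB]
    have hbase := hindep.indepFun_finset SA TB hdisj hfmeas
    set φ₁ : (∀ _ : SA, ℝ) → ℝ × ℝ × ℝ :=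
      fun v => (v ⟨_, hmem0⟩, (⨆ m, v ⟨_, hmemm m⟩, v ⟨_, hmem1⟩)) with hφ₁
    set φ₂ : (∀ _ : TB, ℝ) → ℝ × ℝ :=
      fun v => (v ⟨_, hmem3⟩, v ⟨_, hmem2⟩) with hφ₂
    have hsup : Measurable (fun v : (∀ _ : SA, ℝ) => ⨆ m, v ⟨Sum.inl m, hmemm m⟩) :=
      Measurable.iSup (fun m => measurable_pi_apply _)
    have hφ₁m : Measurable φ₁ :=
      (measurable_pi_apply _).prodMk (hsup.prodMk (measurable_pi_apply _))
    have hφ₂m : Measurable φ₂ := (measurable_pi_apply _).prodMk (measurable_pi_apply _)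
    refine ⟨hbase.comp hφ₁m hφ₂m, ?_, hindep.indepFun (i := Sum.inr 3) (j := Sum.inr 2) (by simp)⟩
    · set SC : Finset (Fin M ⊕ Fin 4) := {Sum.inr 0} with hSC
      set TD : Finset (Fin M ⊕ Fin 4) := insert (Sum.inr 1) (Finset.univ.image Sum.inl) with hTD
      have hdisj2 : Disjoint SC TD := by
        rw [Finset.disjoint_left]
        rintro a ha hb
        simp only [hSC, hTD, Finset.mem_insert, Finset.mem_image, Finset.mem_univ, true_and,
          Finset.mem_singleton] at ha hb
        subst ha
        rcases hb with h | ⟨m, h⟩ <;> simp_all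
      have hm0 : (Sum.inr 0 : Fin M ⊕ Fin 4) ∈ SC := by simp [hSC]
      have hm1 : (Sum.inr 1 : Fin M ⊕ Fin 4) ∈ TD := by simp [hTD]
      have hmm : ∀ m : Fin M, Sum.inl m ∈ TD := fun m => by simp [hTD]
      have hbase2 := hindep.indepFun_finset SC TD hdisj2 hfmeas
      have hsup2 : Measurable (fun v : (∀ _ : TD, ℝ) => ⨆ m, v ⟨Sum.inl m, hmm m⟩) :=
        Measurable.iSup (fun m => measurable_pi_apply _)
      have hψ₁m : Measurable (fun v : (∀ _ : SC, ℝ) => v ⟨_, hm0⟩) := measurable_pi_apply _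
      have hψ₂m : Measurable (fun v : (∀ _ : TD, ℝ) =>
          (⨆ m, v ⟨Sum.inl m, hmm m⟩, v ⟨_, hm1⟩)) := hsup2.prodMk (measurable_pi_apply _)
      exact hbase2.comp hψ₁m hψ₂m
  -- the measurable target sets
  set D1 : Set ((ℝ×ℝ)×(ℝ×ℝ×ℝ)) := {p | Ψ * p.2.1 / (Φ * p.1.1) < γth ∧
    η * (1/(1+Real.sqrt (η*p.1.2))) * (1 - 1/(1+Real.sqrt (η*p.1.2))) * Ψ * p.2.2.1 * p.2.2.2 /
      (η * (1/(1+Real.sqrt (η*p.1.2))) * p.2.2.2 + (1 - 1/(1+Real.sqrt (η*p.1.2))) * Φ * p.1.1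
        + (1 - 1/(1+Real.sqrt (η*p.1.2)))) < γth} with hD1def
  have hD1 : MeasurableSet D1 := by
    apply MeasurableSet.inter
    · exact measurableSet_lt
        (f := fun p : (ℝ×ℝ)×(ℝ×ℝ×ℝ) => Ψ * p.2.1 / (Φ * p.1.1)) (by fun_prop) measurable_const
    · exact measurableSet_lt
        (f := fun p : (ℝ×ℝ)×(ℝ×ℝ×ℝ) =>
          η * (1/(1+Real.sqrt (η*p.1.2))) * (1 - 1/(1+Real.sqrt (η*p.1.2))) * Ψ * p.2.2.1 *
            p.2.2.2 / (η * (1/(1+Real.sqrt (η*p.1.2))) * p.2.2.2 +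
              (1 - 1/(1+Real.sqrt (η*p.1.2))) * Φ * p.1.1 + (1 - 1/(1+Real.sqrt (η*p.1.2)))))
        (by fun_prop) measurable_const
  set D2 : Set ((ℝ×ℝ)×(ℝ×ℝ)) := {p | η * Ψ * p.2.1 * p.2.2 /
    (η * ((1 + Real.sqrt (η * p.1.2)) / Real.sqrt (η * p.1.2)) * p.2.2 +
      (1 + Real.sqrt (η * p.1.2)) * (Φ * p.1.1 + 1)) < γth} with hD2def
  have hD2 : MeasurableSet D2 :=
    measurableSet_lt
      (f := fun p : (ℝ×ℝ)×(ℝ×ℝ) => η * Ψ * p.2.1 * p.2.2 /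
        (η * ((1 + Real.sqrt (η * p.1.2)) / Real.sqrt (η * p.1.2)) * p.2.2 +
          (1 + Real.sqrt (η * p.1.2)) * (Φ * p.1.1 + 1))) (by fun_prop) measurable_const
  set pair : Ω → (ℝ×ℝ)×(ℝ×ℝ×ℝ) := fun ω => ((Ξ ω, W ω), (G ω, (⨆ m, X m ω, Z ω)))
    with hpairdef
  have hpairm : Measurable pair := (hmeasΞ.prodMk hmeasW).prodMk (hmeasG.prodMk hSZ)
  -- probability instances
  haveI hPMSE : IsProbabilityMeasure (expMeasure lamSE) := isProbabilityMeasure_expMeasure hSE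
  haveI hPMRD : IsProbabilityMeasure (expMeasure lamRD) := isProbabilityMeasure_expMeasure hRD
  haveI hPMJE : IsProbabilityMeasure (gammaMeasure K lamJE) :=
    isProbabilityMeasure_gammaMeasure (by exact_mod_cast hK) hJE
  haveI hPMGSZ : IsProbabilityMeasure (P.map (fun ω => (G ω, (⨆ m, X m ω, Z ω)))) :=
    Measure.isProbabilityMeasure_map (hmeasG.prodMk hSZ).aemeasurable
  haveI hPMSZ : IsProbabilityMeasure (P.map (fun ω => (⨆ m, X m ω, Z ω))) :=
    Measure.isProbabilityMeasure_map hSZ.aemeasurable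
  -- joint law factorization
  have e1 : P.map (fun ω => (Ξ ω, W ω)) = (gammaMeasure K lamJE).prod (expMeasure lamRD) := by
    rw [← hlawΞ, ← hlawW]
    exact (indepFun_iff_map_prod_eq_prod_map_map hmeasΞ.aemeasurable hmeasW.aemeasurable).1 h2
  have e3 : P.map (fun ω => (G ω, (⨆ m, X m ω, Z ω)))
      = (expMeasure lamSE).prod (P.map (fun ω => (⨆ m, X m ω, Z ω))) := by
    rw [← hlawG]
    exact (indepFun_iff_map_prod_eq_prod_map_map hmeasG.aemeasurable hSZ.aemeasurable).1 h3
  have e2 : P.map pair = ((P.map (fun ω => (Ξ ω, W ω))).prod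
      (P.map (fun ω => (G ω, (⨆ m, X m ω, Z ω))))) :=
    (indepFun_iff_map_prod_eq_prod_map_map (hmeasΞ.prodMk hmeasW).aemeasurable
      (hmeasG.prodMk hSZ).aemeasurable).1 h1.symm
  have hmapPair : P.map pair = ((gammaMeasure K lamJE).prod (expMeasure lamRD)).prod
      (P.map (fun ω => (G ω, (⨆ m, X m ω, Z ω)))) := by rw [e2, e1]
  -- Z is a.e. nonnegative
  have hZae : ∀ᵐ ω ∂P, 0 ≤ Z ω := by
    have h0 : P (Z ⁻¹' Set.Iio 0) = 0 := by
      rw [← Measure.map_apply hmeasZ measurableSet_Iio, hlawZ]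
      refine le_antisymm (le_trans (measure_mono Set.Iio_subset_Iic_self) ?_) zero_le
      exact (IP_gammaMeasure_Iic_zero 1 lamRE).le
    rw [ae_iff]
    have hset : {ω | ¬ 0 ≤ Z ω} = Z ⁻¹' Set.Iio 0 := by ext ω; simp [not_le]
    rw [hset]; exact h0
  -- complement identity
  have hCset : {ω | γth ≤ max (Ψ * G ω / (Φ * Ξ ω))
      (η * ρstar (W ω) * (1 - ρstar (W ω)) * Ψ * (⨆ m, X m ω) * Z ω /
        (η * ρstar (W ω) * Z ω + (1 - ρstar (W ω)) * Φ * Ξ ω +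
          (1 - ρstar (W ω))))} = (pair ⁻¹' D1)ᶜ := by
    ext ω
    simp only [Set.mem_setOf_eq, Set.mem_compl_iff, Set.mem_preimage, hρstar, hD1def, hpairdef]
    rw [← not_lt, max_lt_iff]
  -- the key computation of the complement probability
  have hPC : P (pair ⁻¹' D1) = ∫⁻ x, (∫⁻ w,
      (ENNReal.ofReal (1 - Real.exp (-γth * lamSE * Φ * x / Ψ)) *
        P {ω | η * Ψ * (⨆ m, X m ω) * Z ω /
          (η * ((1 + Real.sqrt (η * w)) / Real.sqrt (η * w)) * Z ω +
            (1 + Real.sqrt (η * w)) * (Φ * x + 1)) < γth}) ∂(expMeasure lamRD)) ∂(gammaMeasure K lamJE) := by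
    rw [← Measure.map_apply hpairm hD1, hmapPair, Measure.prod_apply hD1,
      lintegral_prod _ (measurable_measure_prodMk_left hD1).aemeasurable]
    refine lintegral_congr_ae ?_
    filter_upwards [IP_gammaMeasure_ae_Ioi K lamJE] with ξ hξ
    refine lintegral_congr_ae ?_
    have haeW : ∀ᵐ w ∂(expMeasure lamRD), w ∈ Set.Ioi (0:ℝ) := IP_gammaMeasure_ae_Ioi 1 lamRD
    filter_upwards [haeW] with w hw
    have hξ0 : (0:ℝ) < ξ := hξ
    have hw0 : (0:ℝ) < w := hw
    have hsq : 0 < Real.sqrt (η * w) := Real.sqrt_pos.2 (mul_pos hη hw0)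
    have hsection : Prod.mk (ξ, w) ⁻¹' D1 = (Set.Iio (γth * (Φ * ξ) / Ψ)) ×ˢ
        {q : ℝ×ℝ | η * (1/(1+Real.sqrt (η*w))) * (1 - 1/(1+Real.sqrt (η*w))) * Ψ * q.1 * q.2 /
          (η * (1/(1+Real.sqrt (η*w))) * q.2 + (1 - 1/(1+Real.sqrt (η*w))) * Φ * ξ
            + (1 - 1/(1+Real.sqrt (η*w)))) < γth} := by
      ext u
      simp only [hD1def, Set.mem_preimage, Set.mem_setOf_eq, Set.mem_prod, Set.mem_Iio]
      refine and_congr ?_ Iff.rfl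
      rw [div_lt_iff₀ (by positivity), lt_div_iff₀ hΨ, mul_comm]
    have hQmeas : MeasurableSet {q : ℝ×ℝ |
        η * (1/(1+Real.sqrt (η*w))) * (1 - 1/(1+Real.sqrt (η*w))) * Ψ * q.1 * q.2 /
          (η * (1/(1+Real.sqrt (η*w))) * q.2 + (1 - 1/(1+Real.sqrt (η*w))) * Φ * ξ
            + (1 - 1/(1+Real.sqrt (η*w)))) < γth} :=
      measurableSet_lt (f := fun q : ℝ×ℝ =>
        η * (1/(1+Real.sqrt (η*w))) * (1 - 1/(1+Real.sqrt (η*w))) * Ψ * q.1 * q.2 /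
          (η * (1/(1+Real.sqrt (η*w))) * q.2 + (1 - 1/(1+Real.sqrt (η*w))) * Φ * ξ
            + (1 - 1/(1+Real.sqrt (η*w))))) (by fun_prop) measurable_const
    rw [hsection, e3, Measure.prod_prod]
    congr 1
    · rw [IP_expMeasure_Iio hSE (by positivity)]
      have harg : -(lamSE * (γth * (Φ * ξ) / Ψ)) = -γth * lamSE * Φ * ξ / Ψ := by ring
      rw [harg]
    · rw [Measure.map_apply hSZ hQmeas]
      refine measure_congr ?_
      rw [Filter.eventuallyEq_set]
      filter_upwards [hZae] with ω hz
      simp only [Set.mem_preimage, Set.mem_setOf_eq]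
      rw [IP_bval_eq hη hΨ hΦ hsq (le_of_lt hξ0) hz]
  -- final assembly
  rw [hCset, prob_compl_eq_one_sub (hD1.preimage hpairm),
    ENNReal.toReal_sub_of_le prob_le_one ENNReal.one_ne_top, ENNReal.toReal_one]
  congr 1
  rw [hPC]
  -- now convert the double lintegral to the double Bochner integral
  have hPB : ∀ v : ℝ × ℝ, P {ω | η * Ψ * (⨆ m, X m ω) * Z ω /
      (η * ((1 + Real.sqrt (η * v.2)) / Real.sqrt (η * v.2)) * Z ω +
        (1 + Real.sqrt (η * v.2)) * (Φ * v.1 + 1)) < γth}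
      = (P.map (fun ω => (⨆ m, X m ω, Z ω))) (Prod.mk v ⁻¹' D2) := by
    intro v
    rw [Measure.map_apply hSZ (hD2.preimage measurable_prodMk_left)]
    rfl
  have hPBm : Measurable (fun v : ℝ × ℝ =>
      (P.map (fun ω => (⨆ m, X m ω, Z ω))) (Prod.mk v ⁻¹' D2)) :=
    measurable_measure_prodMk_left hD2
  have ham : Measurable (fun x : ℝ => 1 - Real.exp (-γth * lamSE * Φ * x / Ψ)) := by fun_prop
  set Fu : ℝ × ℝ → ℝ≥0∞ := fun v => ENNReal.ofReal (1 - Real.exp (-γth * lamSE * Φ * v.1 / Ψ)) *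
    (P.map (fun ω => (⨆ m, X m ω, Z ω))) (Prod.mk v ⁻¹' D2) with hFudef
  have hFum : Measurable Fu := ((ham.comp measurable_fst).ennreal_ofReal).mul hPBm
  have hFule : ∀ v, Fu v ≤ 1 := by
    intro v
    refine mul_le_one' (ENNReal.ofReal_le_one.2 ?_) prob_le_one
    exact sub_le_self _ (Real.exp_nonneg _)
  have hJm : Measurable (fun x : ℝ => ∫⁻ w, Fu (x, w) ∂(expMeasure lamRD)) :=
    Measurable.lintegral_prod_right (f := fun x w => Fu (x, w)) hFum
  have hJle : ∀ x : ℝ, (∫⁻ w, Fu (x, w) ∂(expMeasure lamRD)) ≤ 1 := by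
    intro x
    calc ∫⁻ w, Fu (x, w) ∂(expMeasure lamRD) ≤ ∫⁻ _, 1 ∂(expMeasure lamRD) :=
          lintegral_mono (fun w => hFule _)
      _ = 1 := by simp
  have hstep1 : ∫⁻ x, (∫⁻ w,
      (ENNReal.ofReal (1 - Real.exp (-γth * lamSE * Φ * x / Ψ)) *
        P {ω | η * Ψ * (⨆ m, X m ω) * Z ω /
          (η * ((1 + Real.sqrt (η * w)) / Real.sqrt (η * w)) * Z ω +
            (1 + Real.sqrt (η * w)) * (Φ * x + 1)) < γth}) ∂(expMeasure lamRD)) ∂(gammaMeasure K lamJE)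
      = ∫⁻ x, (∫⁻ w, Fu (x, w) ∂(expMeasure lamRD)) ∂(gammaMeasure K lamJE) := by
    refine lintegral_congr (fun x => lintegral_congr (fun w => ?_))
    rw [hFudef]
    simp only []
    rw [hPB (x, w)]
  rw [hstep1]
  have hgamma := IP_lintegral_withDensity_toReal
    (d := gammaPDF K lamJE) ((measurable_gammaPDFReal _ _).ennreal_ofReal)
    (IP_setLintegral_gammaPDF_Iic_zero K lamJE)
    (dR := fun x => lamJE ^ K / (Nat.factorial (K - 1)) * x ^ (K - 1) * Real.exp (-lamJE * x))
    (fun x hx => IP_gammaPDF_eq_ofReal hK x hx)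
    (fun x hx => by have : (0:ℝ) < x := hx; positivity)
    (by fun_prop) hJm hJle
  rw [show (gammaMeasure (K:ℝ) lamJE) = volume.withDensity (gammaPDF K lamJE) from rfl] at *
  rw [hgamma]
  refine setIntegral_congr_fun measurableSet_Ioi (fun x hx => ?_)
  have hx0 : (0:ℝ) < x := hx
  have hax : 0 ≤ 1 - Real.exp (-γth * lamSE * Φ * x / Ψ) := by
    have hle : -γth * lamSE * Φ * x / Ψ ≤ 0 := by
      apply div_nonpos_of_nonpos_of_nonneg _ hΨ.le
      simp only [neg_mul]
      exact neg_nonpos.2 (by positivity)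
    simpa using Real.exp_le_one_iff.2 hle
  rw [integral_mul_const]
  congr 1
  have hexp := IP_lintegral_withDensity_toReal
    (d := exponentialPDF lamRD) ((measurable_exponentialPDFReal _).ennreal_ofReal)
    (IP_setLintegral_gammaPDF_Iic_zero 1 lamRD)
    (dR := fun w => lamRD * Real.exp (-lamRD * w))
    (fun w hw => IP_exponentialPDF_eq_ofReal w hw)
    (fun w hw => by positivity)
    (by fun_prop) (F := fun w => Fu (x, w)) (hFum.comp (measurable_prodMk_left (x := x)))
    (fun w => hFule _)
  rw [show (expMeasure lamRD) = volume.withDensity (exponentialPDF lamRD) from rfl]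
  rw [hexp]
  refine setIntegral_congr_fun measurableSet_Ioi (fun w hw => ?_)
  rw [hFudef]
  simp only [Function.comp]
  rw [ENNReal.toReal_mul, ENNReal.toReal_ofReal hax, ← hPB (x, w)]
end

section
/- Let η > 0, Ψ > 0, a > 0 and c > 0, and define γ_D(ρ) = η ρ (1−ρ) Ψ a c / (η ρ c + (1−ρ)) for ρ ∈ (0,1). Then the derivative of γ_D vanishes at ρ ∈ (0,1) if and only if ρ = 1/(1 + √(ηc)); moreover the other stationary candidate 1/(1 − √(ηc)) never lies in (0,1). -/
/-- Stationarity analysis of `γ_D(ρ) = ηρ(1-ρ)Ψac/(ηρc + (1-ρ))` on `(0,1)`: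
the derivative vanishes at `ρ ∈ (0,1)` iff `ρ = 1/(1 + √(ηc))`, and the other stationary
candidate `1/(1 - √(ηc))` never lies in `(0,1)`. -/
theorem statement_15 (η Ψ a c : ℝ) (hη : 0 < η) (hΨ : 0 < Ψ) (ha : 0 < a) (hc : 0 < c) :
    (∀ ρ ∈ Set.Ioo (0 : ℝ) 1,
      (deriv (fun ρ => η * ρ * (1 - ρ) * Ψ * a * c / (η * ρ * c + (1 - ρ))) ρ = 0 ↔
        ρ = 1 / (1 + Real.sqrt (η * c)))) ∧
    1 / (1 - Real.sqrt (η * c)) ∉ Set.Ioo (0 : ℝ) 1 := by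
  have hm : 0 < η * c := mul_pos hη hc
  set s := Real.sqrt (η * c) with hs
  have hs0 : 0 < s := Real.sqrt_pos.mpr hm
  have hs2 : s ^ 2 = η * c := Real.sq_sqrt hm.le
  constructor
  · intro ρ hρ
    obtain ⟨hρ0, hρ1⟩ := hρ
    have hv : 0 < η * ρ * c + (1 - ρ) := by
      have : 0 < η * ρ * c := mul_pos (mul_pos hη hρ0) hc
      linarith
    have hvne : η * ρ * c + (1 - ρ) ≠ 0 := hv.ne'
    have hu : HasDerivAt (fun ρ : ℝ => η * ρ * (1 - ρ) * Ψ * a * c)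
        (η * (1 - 2 * ρ) * Ψ * a * c) ρ := by
      have h1 : HasDerivAt (fun ρ : ℝ => η * ρ * (1 - ρ) * Ψ * a * c)
          ((η * 1 * (1 - ρ) + η * ρ * (0 - 1)) * Ψ * a * c) ρ :=
        ((((((hasDerivAt_id ρ).const_mul η).mul
          ((hasDerivAt_const ρ 1).sub (hasDerivAt_id ρ))).mul_const Ψ).mul_const a).mul_const c)
      convert h1 using 1; ring
    have hvd : HasDerivAt (fun ρ : ℝ => η * ρ * c + (1 - ρ)) (η * c - 1) ρ := by
      have h1 : HasDerivAt (fun ρ : ℝ => η * ρ * c + (1 - ρ)) (η * 1 * c + (0 - 1)) ρ :=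
        (((hasDerivAt_id ρ).const_mul η).mul_const c).add
          ((hasDerivAt_const ρ 1).sub (hasDerivAt_id ρ))
      convert h1 using 1; ring
    have hdf : HasDerivAt (fun ρ => η * ρ * (1 - ρ) * Ψ * a * c / (η * ρ * c + (1 - ρ)))
        ((η * (1 - 2 * ρ) * Ψ * a * c * (η * ρ * c + (1 - ρ)) -
          η * ρ * (1 - ρ) * Ψ * a * c * (η * c - 1)) / (η * ρ * c + (1 - ρ)) ^ 2) ρ :=
      hu.div hvd hvne
    rw [hdf.deriv, div_eq_zero_iff]
    have hsq : ((η * ρ * c + (1 - ρ)) ^ 2 : ℝ) ≠ 0 := pow_ne_zero _ hvne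
    have hK : 0 < η * Ψ * a * c := by positivity
    have hsplus : (0:ℝ) < 1 + s := by linarith
    constructor
    · rintro (h | h)
      · have hnum : η * Ψ * a * c * ((1 - ρ) ^ 2 - η * c * ρ ^ 2) = 0 := by
          linear_combination h
        have h2 : (1 - ρ) ^ 2 - η * c * ρ ^ 2 = 0 := by
          rcases mul_eq_zero.mp hnum with h' | h'
          · exact absurd h' hK.ne'
          · exact h'
        have h5 : (1 - ρ - s * ρ) * (1 - ρ + s * ρ) = 0 := by
          linear_combination h2 - ρ ^ 2 * hs2
        have h6 : 0 < 1 - ρ + s * ρ := by nlinarith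
        have h7 : 1 - ρ - s * ρ = 0 := by
          rcases mul_eq_zero.mp h5 with h' | h'
          · exact h'
          · exact absurd h' h6.ne'
        field_simp
        linarith [mul_comm ρ s]
      · exact absurd h hsq
    · intro h
      left
      have hρeq : ρ * (1 + s) = 1 := by
        rw [h]; field_simp
      linear_combination (-(η * Ψ * a * c * (1 - ρ + s * ρ))) * hρeq +
        η * Ψ * a * c * ρ ^ 2 * hs2
  · rintro ⟨h0, h1⟩
    rcases lt_trichotomy s 1 with h | h | h
    · have hpos : 0 < 1 - s := by linarith
      have : 1 < 1 / (1 - s) := by rw [lt_div_iff₀ hpos]; linarith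
      linarith
    · rw [← h, sub_self, div_zero] at h0
      exact lt_irrefl 0 h0
    · have : 1 / (1 - s) < 0 := div_neg_of_pos_of_neg one_pos (by linarith)
      linarith
end
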